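/- For every a ≥ h* and every ε > 0 there exist H < ∞ and N < ∞ such that P_a[Φ_n ≤ H for all n ≥ 0] ≥ 1 − ε and P_a[|Z_n| ≤ N for all n ≥ 0] ≥ 1 − ε, where Z_n = {x ∈ C_o^{h*} ∩ 𝕋⁺ : d(o,x) = n} is the n-th generation of the critical cluster in the forward tree and Φ_n = max_{x ∈ Z_n} φ_x (with the convention max ∅ = −∞). -/

import Mathlib

open MeasureTheory ProbabilityTheory Real Set Filter Topology NNReal
open scoped Classical ENNReal

noncomputable section

namespace GFF

/-- Vertex set of the `(d+1)`-regular tree `𝕋`: `none` is the root `o`, and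
`some (i, l)` is the vertex reached from the root by first crossing the `i`-th
edge at the root (`i : Fin (d+1)`) and then following the child steps in `l`
(each non-root vertex has `d` children). The fixed neighbour `ō` of the root is
`some (Fin.last d, [])`. -/
abbrev V (d : ℕ) := Option (Fin (d + 1) × List (Fin d))

variable (d : ℕ)

/-- Graph distance from the root `o`. -/
def depth : V d → ℕ := fun v => v.elim 0 fun p => p.2.length + 1

/-- The geodesic path from the root `o` to `v`, including both endpoints. -/
def pathFromRoot : V d → List (V d)
  | none => [none]
  | some (i, l) => none :: (List.range (l.length + 1)).map fun k => some (i, l.take k)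

/-- The forward tree `𝕋⁺`: vertices whose geodesic from `o` does not pass through
the fixed neighbour `ō = some (Fin.last d, [])`. -/
def forward : Set (V d) := {v | v.elim True fun p => p.1 ≠ Fin.last d}

/-- The variance `σ_ν² = d/(d-1)` of the root field value. -/
def varRoot : ℝ≥0 := (d : ℝ≥0) / ((d : ℝ≥0) - 1)

/-- The variance `σ_Y² = (d+1)/d` of the innovations. -/
def varY : ℝ≥0 := ((d : ℝ≥0) + 1) / (d : ℝ≥0)

/-- The Gaussian free field on `𝕋` with root value `a`, built from the innovations
`ω`; this is the closed form of the recursion `φ_o = a`, `φ_x = φ_{x̄}/d + ω_x`,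
where `x̄` is the parent of `x`. -/
def field (a : ℝ) (ω : V d → ℝ) : V d → ℝ
  | none => a
  | some (i, l) =>
      a / (d : ℝ) ^ (l.length + 1) +
        ∑ k ∈ Finset.range (l.length + 1), ω (some (i, l.take k)) / (d : ℝ) ^ (l.length - k)

variable {Ω : Type} [MeasurableSpace Ω]

/-- `(P, Y)` is an environment for the Gaussian free field on `𝕋`: the `Y_x`,
`x ∈ 𝕋`, are independent centred Gaussians with `Var(Y_o) = d/(d-1)` and
`Var(Y_x) = (d+1)/d` for `x ≠ o`.  Under `P`, the field `field d (Y none ω) (Y · ω)`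
then has the law of the GFF on `𝕋` (covariance = Green function), and
`field d a (Y · ω)` has its law conditioned on `φ_o = a`, i.e. `P_a`. -/
structure IsGFFEnv (P : Measure Ω) (Y : V d → Ω → ℝ) : Prop where
  prob : IsProbabilityMeasure P
  meas : ∀ v, Measurable (Y v)
  indep : iIndepFun (m := fun _ : V d => (inferInstance : MeasurableSpace ℝ)) Y P
  law : ∀ v, P.map (Y v) = gaussianReal 0 (if v = none then varRoot d else varY d)

/-- The connected component `C_o^h` of the root in the level set `{φ ≥ h}`:
on a tree, `v` is connected to `o` in `{φ ≥ h}` iff `φ ≥ h` along the whole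
geodesic from `o` to `v`. -/
def cluster (h : ℝ) (φ : V d → ℝ) : Set (V d) :=
  {v | ∀ z ∈ pathFromRoot d v, h ≤ φ z}

/-- The unconditioned field (root value `Y_o`). -/
def fieldUncond (Y : V d → Ω → ℝ) (ω : Ω) : V d → ℝ :=
  field d (Y none ω) fun v => Y v ω

/-- `η(h,a) = P_a[|C_o^h| = ∞]`. -/
def η (P : Measure Ω) (Y : V d → Ω → ℝ) (h a : ℝ) : ℝ :=
  (P {ω | (cluster d h (field d a fun v => Y v ω)).Infinite}).toReal

/-- `η⁺(h,a) = P_a[|C_o^h ∩ 𝕋⁺| = ∞]`. -/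
def ηplus (P : Measure Ω) (Y : V d → Ω → ℝ) (h a : ℝ) : ℝ :=
  (P {ω | (cluster d h (field d a fun v => Y v ω) ∩ forward d).Infinite}).toReal

/-- The centred Gaussian measure `ν` with variance `d/(d-1)`. -/
def ν : Measure ℝ := gaussianReal 0 (varRoot d)

/-- The centred Gaussian density `ρ_Y` with variance `(d+1)/d`. -/
def ρY : ℝ → ℝ := gaussianPDFReal 0 (varY d)

/-- The operator `L_h` on `L²(ν)`:
`L_h[f](a) = 1_{[h,∞)}(a) · d · ∫_{[h,∞)} f(x) ρ_Y(x − a/d) dx`. -/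
def Lop (h : ℝ) (f : ℝ → ℝ) : ℝ → ℝ :=
  (Ici h).indicator fun a => (d : ℝ) * ∫ x in Ici h, f x * ρY d (x - a / d)

/-- `(hstar, χ)` is the critical pair: `χ = χ_{h*}` is the unique non-negative
unit-`L²(ν)`-norm eigenfunction of `L_{h*}`, continuous and strictly positive on
`[h*,∞)`, vanishing on `(−∞,h*)`, with eigenvalue `λ_{h*} = 1`; this
characterises the critical height `h*` (the unique `h` with `λ_h = 1`). -/
structure IsCriticalPair (hstar : ℝ) (χ : ℝ → ℝ) : Prop where
  cont : ContinuousOn χ (Ici hstar)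
  nonneg : ∀ a, 0 ≤ χ a
  pos : ∀ a, hstar ≤ a → 0 < χ a
  zero : ∀ a, a < hstar → χ a = 0
  norm : (∫ a, χ a ^ 2 ∂(ν d)) = 1
  eigen : ∀ a, Lop d hstar χ a = χ a

/-- The constant `C₁ = Γ(1/2)⁻¹ √( (2d/(d−1)) ⟨1,χ⟩_ν / ⟨χ,χ²⟩_ν )`. -/
def Cone (χ : ℝ → ℝ) : ℝ :=
  (1 / Real.Gamma (1 / 2)) *
    Real.sqrt ((2 * d / (d - 1)) * (∫ a, χ a ∂(ν d)) / (∫ a, χ a ^ 3 ∂(ν d)))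

/-- The constant `C₂ = 2 ((d−1)/(d+1)) ⟨Id,χ²⟩_ν / ⟨χ,χ²⟩_ν`. -/
def Ctwo (χ : ℝ → ℝ) : ℝ :=
  2 * ((d - 1) / (d + 1)) * (∫ a, a * χ a ^ 2 ∂(ν d)) / (∫ a, χ a ^ 3 ∂(ν d))

/-- The critical cluster in the forward tree, `C_o^{h*} ∩ 𝕋⁺`. -/
def fwdCluster (hstar a : ℝ) (Y : V d → Ω → ℝ) (ω : Ω) : Set (V d) :=
  cluster d hstar (field d a fun v => Y v ω) ∩ forward d

/-- The Laplace transform `𝓛_a(s) = E_a[e^{−s|C_o^{h*} ∩ 𝕋⁺|}]` (with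
`e^{-s·∞} = 0` for `s > 0` encoded by the `Finite` case split). -/
def laplaceFwd (P : Measure Ω) (Y : V d → Ω → ℝ) (hstar a s : ℝ) : ℝ :=
  ∫ ω, (if (fwdCluster d hstar a Y ω).Finite
    then Real.exp (-s * (fwdCluster d hstar a Y ω).ncard) else 0) ∂P

/-- The Laplace transform `𝓛̃_a(s) = E_a[e^{−s|C_o^{h*}|}]`. -/
def laplaceFull (P : Measure Ω) (Y : V d → Ω → ℝ) (hstar a s : ℝ) : ℝ :=
  ∫ ω, (if (cluster d hstar (field d a fun v => Y v ω)).Finite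
    then Real.exp (-s * (cluster d hstar (field d a fun v => Y v ω)).ncard) else 0) ∂P

/-- `γ_s(a) = 1 − 𝓛_a(s)` for `a ≥ h*`, and `0` for `a < h*`. -/
def γfun (P : Measure Ω) (Y : V d → Ω → ℝ) (hstar s a : ℝ) : ℝ :=
  if hstar ≤ a then 1 - laplaceFwd d P Y hstar a s else 0

/-- `a₁(s) = ⟨γ_s, χ⟩_ν`. -/
def aone (P : Measure Ω) (Y : V d → Ω → ℝ) (hstar : ℝ) (χ : ℝ → ℝ) (s : ℝ) : ℝ :=
  ∫ a, γfun d P Y hstar s a * χ a ∂(ν d)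

/-- The `n`-th generation `Z_n = {x ∈ C_o^{h*} ∩ 𝕋⁺ : d(o,x) = n}`. -/
def gen (hstar a : ℝ) (Y : V d → Ω → ℝ) (ω : Ω) (n : ℕ) : Set (V d) :=
  {x | x ∈ fwdCluster d hstar a Y ω ∧ depth d x = n}

/-- The shifted Gaussian measure `ν*`, with density `ρ_{ν*}(x) = ρ_ν(x + h*)`. -/
def νstar (hstar : ℝ) : Measure ℝ := gaussianReal (-hstar) (varRoot d)

/-- The operator `H_h[f](a) = ∫_0^∞ f(x) ρ_Y(x − a/d + ((d−1)/d)h) dx` for `a ≥ 0`,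
and `0` for `a < 0` (so that `H_h = d⁻¹ θ_h L_h θ_h⁻¹`). -/
def Hop (h : ℝ) (f : ℝ → ℝ) : ℝ → ℝ :=
  (Ici (0:ℝ)).indicator fun a =>
    ∫ x in Ici (0:ℝ), f x * ρY d (x - a / d + ((d - 1) / d) * h)

/-! ### Auxiliary development for the proof -/

section Aux

/-- The `j`-th child of a vertex, within the forward tree when starting from the root. -/
def child : V d → Fin d → V d
  | none, j => some (j.castSucc, [])
  | some (i, l), j => some (i, l ++ [j])

/-- Forward vertices at depth `n`. -/
def T : ℕ → Finset (V d)
  | 0 => {none}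
  | n + 1 => ((T n) ×ˢ (Finset.univ : Finset (Fin d))).image fun p => child d p.1 p.2

variable {d}

lemma depth_child (x : V d) (j : Fin d) : depth d (child d x j) = depth d x + 1 := by
  cases x with
  | none => simp [child, depth]
  | some p => obtain ⟨i, l⟩ := p; simp [child, depth]

lemma forward_child (x : V d) (j : Fin d) : child d x j ∈ forward d ↔ x ∈ forward d := by
  cases x with
  | none =>
    simp only [child, forward, Set.mem_setOf_eq, Option.elim]
    exact ⟨fun _ => trivial, fun _ => (Fin.castSucc_lt_last j).ne⟩
  | some p => obtain ⟨i, l⟩ := p; simp [child, forward]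

lemma depth_eq_zero_iff {x : V d} : depth d x = 0 ↔ x = none := by
  cases x with
  | none => simp [depth]
  | some p => obtain ⟨i, l⟩ := p; simp [depth]

lemma mem_T_iff {n : ℕ} {x : V d} : x ∈ T d n ↔ depth d x = n ∧ x ∈ forward d := by
  induction n generalizing x with
  | zero =>
    simp only [T, Finset.mem_singleton]
    constructor
    · rintro rfl; exact ⟨rfl, trivial⟩
    · rintro ⟨h, -⟩; exact depth_eq_zero_iff.mp h
  | succ n ih =>
    simp only [T, Finset.mem_image, Finset.mem_product, Finset.mem_univ, and_true]
    constructor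
    · rintro ⟨⟨y, j⟩, hy, rfl⟩
      obtain ⟨hdy, hfy⟩ := ih.mp hy
      exact ⟨by rw [depth_child, hdy], (forward_child y j).mpr hfy⟩
    · rintro ⟨hdx, hfx⟩
      cases x with
      | none => simp [depth] at hdx
      | some p =>
        obtain ⟨i, l⟩ := p
        have hl : l.length = n := by simpa [depth] using hdx
        have hfi : i ≠ Fin.last d := hfx
        cases n with
        | zero =>
          have hl0 : l = [] := List.length_eq_zero_iff.mp hl
          refine ⟨⟨none, i.castPred hfi⟩, by simp [T], ?_⟩
          simp [child, hl0, Fin.castSucc_castPred]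
        | succ m =>
          have hlne : l ≠ [] := by
            intro h; rw [h] at hl; simp at hl
          refine ⟨⟨some (i, l.dropLast), l.getLast hlne⟩, ?_, ?_⟩
          · refine ih.mpr ⟨?_, hfi⟩
            simp [depth, List.length_dropLast, hl]
          · simp [child, List.dropLast_append_getLast hlne]

lemma mem_T_child {n : ℕ} {x : V d} (hx : x ∈ T d n) (j : Fin d) :
    child d x j ∈ T d (n + 1) := by
  simp only [T, Finset.mem_image]
  exact ⟨⟨x, j⟩, by simp [hx], rfl⟩

lemma pathFromRoot_child (x : V d) (j : Fin d) :
    pathFromRoot d (child d x j) = pathFromRoot d x ++ [child d x j] := by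
  cases x with
  | none => simp [child, pathFromRoot, List.range_succ]
  | some p =>
    obtain ⟨i, l⟩ := p
    simp only [child, pathFromRoot]
    rw [List.length_append]
    simp only [List.length_singleton]
    rw [show l.length + 1 + 1 = (l.length + 1) + 1 from rfl, List.range_succ]
    rw [List.map_append]
    simp only [List.cons_append]
    congr 1
    congr 1
    · apply List.map_congr_left
      intro k hk
      rw [List.mem_range] at hk
      rw [List.take_append_of_le_length (by omega)]
    · simp only [List.map_cons, List.map_nil, List.cons.injEq, and_true,
        Option.some.injEq, Prod.mk.injEq, true_and]
      rw [List.take_of_length_le (by simp)]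

lemma mem_pathFromRoot_self (x : V d) : x ∈ pathFromRoot d x := by
  cases x with
  | none => simp [pathFromRoot]
  | some p =>
    obtain ⟨i, l⟩ := p
    simp only [pathFromRoot, List.mem_cons, List.mem_map, List.mem_range]
    right
    exact ⟨l.length, by omega, by simp⟩

lemma mem_cluster_child {h : ℝ} {φ : V d → ℝ} {x : V d} {j : Fin d} :
    child d x j ∈ cluster d h φ ↔ x ∈ cluster d h φ ∧ h ≤ φ (child d x j) := by
  simp only [cluster, Set.mem_setOf_eq, pathFromRoot_child, List.forall_mem_append,
    List.forall_mem_singleton]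

lemma cluster_le_self {h : ℝ} {φ : V d → ℝ} {x : V d} (hx : x ∈ cluster d h φ) :
    h ≤ φ x := hx x (mem_pathFromRoot_self x)

lemma root_mem_cluster {h a : ℝ} {ω : V d → ℝ} (ha : h ≤ a) :
    (none : V d) ∈ cluster d h (field d a ω) := by
  intro z hz
  simp only [pathFromRoot, List.mem_singleton] at hz
  subst hz
  exact ha

lemma field_child (hd : 2 ≤ d) (a : ℝ) (ω : V d → ℝ) (x : V d) (j : Fin d) :
    field d a ω (child d x j) = field d a ω x / d + ω (child d x j) := by
  have hd0 : (d : ℝ) ≠ 0 := by positivity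
  cases x with
  | none =>
    simp [child, field, pow_one]
  | some p =>
    obtain ⟨i, l⟩ := p
    simp only [child, field]
    rw [List.length_append]
    simp only [List.length_singleton]
    rw [Finset.sum_range_succ]
    have htake : ∀ k ∈ Finset.range (l.length + 1),
        (l ++ [j]).take k = l.take k := by
      intro k hk
      rw [Finset.mem_range] at hk
      exact List.take_append_of_le_length (by omega)
    rw [Finset.sum_congr rfl (fun k hk => by rw [htake k hk])]
    have : ∀ k ∈ Finset.range (l.length + 1),
        ω (some (i, l.take k)) / (d : ℝ) ^ (l.length + 1 - k)
          = (ω (some (i, l.take k)) / (d : ℝ) ^ (l.length - k)) / d := by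
      intro k hk
      rw [Finset.mem_range] at hk
      rw [div_div, ← pow_succ]
      congr 2
      omega
    rw [Finset.sum_congr rfl this, ← Finset.sum_div]
    have hslf : (l ++ [j]).take (l.length + 1) = l ++ [j] := by
      apply List.take_of_length_le; simp
    rw [hslf]
    simp only [Nat.sub_self, pow_zero, div_one]
    rw [add_div, div_div, ← pow_succ]
    ring

lemma sum_T_succ {M : Type*} [AddCommMonoid M] (n : ℕ) (f : V d → M) :
    ∑ y ∈ T d (n + 1), f y = ∑ x ∈ T d n, ∑ j : Fin d, f (child d x j) := by
  rw [show T d (n+1) = ((T d n) ×ˢ (Finset.univ : Finset (Fin d))).image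
      (fun p => child d p.1 p.2) from rfl]
  rw [Finset.sum_image, Finset.sum_product]
  rintro ⟨x₁, j₁⟩ h₁ ⟨x₂, j₂⟩ h₂ heq
  simp only [Finset.mem_coe, Finset.mem_product] at h₁ h₂
  have hd₁ := (mem_T_iff.mp h₁.1).1
  have hd₂ := (mem_T_iff.mp h₂.1).1
  cases x₁ with
  | none =>
    cases x₂ with
    | none =>
      simp only [child, Option.some.injEq, Prod.mk.injEq] at heq
      have := heq.1
      rw [Fin.castSucc_inj] at this
      simp [this]
    | some p => rw [← hd₂] at hd₁; simp [depth] at hd₁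
  | some p =>
    cases x₂ with
    | none => rw [← hd₂] at hd₁; obtain ⟨i, l⟩ := p; simp [depth] at hd₁
    | some q =>
      obtain ⟨i₁, l₁⟩ := p
      obtain ⟨i₂, l₂⟩ := q
      simp only [child, Option.some.injEq, Prod.mk.injEq] at heq
      obtain ⟨rfl, heq2⟩ := heq
      have hlen : l₁.length = l₂.length := by
        have h12 := hd₁.trans hd₂.symm
        simpa [depth] using h12
      obtain ⟨rfl, hj⟩ := List.append_inj heq2 hlen
      simp only [List.cons.injEq] at hj
      simp [hj.1]

end Aux
section Chi

variable {d : ℕ} {hstar : ℝ} {χ : ℝ → ℝ}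

lemma continuous_ρY : Continuous (ρY d) := by
  unfold ρY
  rw [gaussianPDFReal_def]
  fun_prop

lemma ρY_nonneg (x : ℝ) : 0 ≤ ρY d x := gaussianPDFReal_nonneg _ _ x

lemma dpos (hd : 2 ≤ d) : (0:ℝ) < (d:ℝ) := by
  exact_mod_cast Nat.lt_of_lt_of_le Nat.zero_lt_two hd

lemma varY_ne_zero (hd : 2 ≤ d) : varY d ≠ 0 := by
  have hd0 : (0:ℝ≥0) < (d : ℝ≥0) := by
    exact_mod_cast Nat.lt_of_lt_of_le Nat.zero_lt_two hd
  simp only [varY, ne_eq, div_eq_zero_iff]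
  push_neg
  refine ⟨?_, hd0.ne'⟩
  intro h
  have h1 : (0:ℝ≥0) < (d:ℝ≥0) + 1 := by positivity
  rw [h] at h1; exact lt_irrefl _ h1

lemma chi_meas (hcrit : IsCriticalPair d hstar χ) : Measurable χ := by
  have hcont : Continuous fun x => χ (max x hstar) := by
    apply hcrit.cont.comp_continuous (continuous_id.max continuous_const)
    intro x; exact mem_Ici.mpr (le_max_right _ _)
  have hx : χ = fun x => if x < hstar then 0 else χ (max x hstar) := by
    funext x
    by_cases hlt : x < hstar
    · simp [hlt, hcrit.zero x hlt]
    · simp [hlt, max_eq_left (le_of_not_gt hlt)]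
  rw [hx]
  exact Measurable.ite measurableSet_Iio measurable_const hcont.measurable

lemma eigen_integral (hd : 2 ≤ d) (hcrit : IsCriticalPair d hstar χ) {b : ℝ}
    (hb : hstar ≤ b) :
    IntegrableOn (fun x => χ x * ρY d (x - b / (d:ℝ))) (Ici hstar) volume ∧
      ∫ x in Ici hstar, χ x * ρY d (x - b / (d:ℝ)) = χ b / (d:ℝ) := by
  have hd0 : (0:ℝ) < (d:ℝ) := dpos hd
  have h := hcrit.eigen b
  unfold Lop at h
  rw [Set.indicator_of_mem (mem_Ici.mpr hb)] at h
  have hpos : 0 < χ b := hcrit.pos b hb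
  have hint : IntegrableOn (fun x => χ x * ρY d (x - b / (d:ℝ))) (Ici hstar) volume := by
    by_contra hni
    rw [integral_undef hni] at h
    rw [mul_zero] at h
    exact absurd h.symm hpos.ne'
  refine ⟨hint, ?_⟩
  rw [eq_div_iff hd0.ne']
  rw [mul_comm] at h
  exact h

lemma gauss_step (hd : 2 ≤ d) (hcrit : IsCriticalPair d hstar χ) {b : ℝ}
    (hb : hstar ≤ b) :
    ∫⁻ u, (if hstar ≤ b / (d:ℝ) + u then ENNReal.ofReal (χ (b / (d:ℝ) + u)) else 0)
        ∂(gaussianReal 0 (varY d)) = ENNReal.ofReal (χ b / (d:ℝ)) := by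
  have hv := varY_ne_zero hd
  have hmχ := chi_meas hcrit
  have hmset : MeasurableSet {u : ℝ | hstar ≤ b / (d:ℝ) + u} :=
    measurableSet_le measurable_const (measurable_const.add measurable_id)
  have hf : Measurable fun u : ℝ =>
      (if hstar ≤ b / (d:ℝ) + u then ENNReal.ofReal (χ (b / (d:ℝ) + u)) else 0) := by
    apply Measurable.ite hmset
    · exact (hmχ.comp (measurable_const.add measurable_id)).ennreal_ofReal
    · exact measurable_const
  rw [gaussianReal_of_var_ne_zero 0 hv,
    lintegral_withDensity_eq_lintegral_mul _ (measurable_gaussianPDF _ _) hf]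
  have hpt : ∀ u : ℝ, (gaussianPDF 0 (varY d) * fun u : ℝ =>
      (if hstar ≤ b / (d:ℝ) + u then ENNReal.ofReal (χ (b / (d:ℝ) + u)) else 0)) u
      = (fun t => if hstar ≤ t then ENNReal.ofReal (χ t * ρY d (t - b / (d:ℝ))) else 0)
          (u + b / (d:ℝ)) := by
    intro u
    simp only [Pi.mul_apply]
    have hcond : (hstar ≤ b / (d:ℝ) + u) ↔ (hstar ≤ u + b / (d:ℝ)) := by
      constructor <;> intro hh <;> linarith
    by_cases hc : hstar ≤ b / (d:ℝ) + u
    · rw [if_pos hc, if_pos (hcond.mp hc)]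
      have : u + b / (d:ℝ) - b / (d:ℝ) = u := by ring
      rw [this]
      rw [show b / (d:ℝ) + u = u + b / (d:ℝ) by ring]
      rw [gaussianPDF]
      rw [← ENNReal.ofReal_mul (gaussianPDFReal_nonneg _ _ _)]
      rw [mul_comm]
      rfl
    · rw [if_neg hc, if_neg (fun hh => hc (hcond.mpr hh)), mul_zero]
  rw [lintegral_congr hpt]
  rw [lintegral_add_right_eq_self
    (fun t => if hstar ≤ t then ENNReal.ofReal (χ t * ρY d (t - b / (d:ℝ))) else 0) (b / (d:ℝ))]
  have hind : (fun t => if hstar ≤ t then ENNReal.ofReal (χ t * ρY d (t - b / (d:ℝ))) else 0)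
      = fun t => (Ici hstar).indicator
          (fun t => ENNReal.ofReal (χ t * ρY d (t - b / (d:ℝ)))) t := by
    funext t
    rw [Set.indicator_apply]
    simp [mem_Ici]
  rw [hind, lintegral_indicator measurableSet_Ici]
  rw [← ofReal_integral_eq_lintegral_ofReal (eigen_integral hd hcrit hb).1
    (ae_of_all _ (fun x => mul_nonneg (hcrit.nonneg x) (ρY_nonneg _)))]
  rw [(eigen_integral hd hcrit hb).2]

lemma chi_bounds (hd : 2 ≤ d) (hcrit : IsCriticalPair d hstar χ) :
    ∃ δ : ℝ, 0 < δ ∧ (∀ b, hstar ≤ b → δ ≤ χ b) ∧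
      ∀ M : ℝ, ∃ H : ℝ, ∀ b, H ≤ b → M < χ b := by
  classical
  have hd0 : (0:ℝ) < (d:ℝ) := dpos hd
  have hd2 : (2:ℝ) ≤ (d:ℝ) := by exact_mod_cast hd
  have hv := varY_ne_zero hd
  -- choose the window w
  obtain ⟨w, hw0, hw⟩ : ∃ w : ℝ, 0 < w ∧ (3:ℝ)/4 ≤ ∫ x in Icc (-w) w, ρY d x := by
    set μ := gaussianReal 0 (varY d) with hμ
    have hdir : Directed (· ⊆ ·) (fun n : ℕ => Icc (-(n:ℝ)) (n:ℝ)) := by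
      apply Monotone.directed_le
      intro m n hmn
      apply Icc_subset_Icc <;> · simp; exact_mod_cast hmn
    have hun : (⋃ n : ℕ, Icc (-(n:ℝ)) (n:ℝ)) = univ := by
      ext x
      simp only [mem_iUnion, mem_Icc, mem_univ, iff_true]
      refine ⟨⌈|x|⌉₊, ?_, ?_⟩
      · have h1 : |x| ≤ (⌈|x|⌉₊ : ℝ) := Nat.le_ceil _
        have h2 := neg_abs_le x
        linarith
      · have h1 : |x| ≤ (⌈|x|⌉₊ : ℝ) := Nat.le_ceil _
        have h2 := le_abs_self x
        linarith
    have hsup : (⨆ n : ℕ, μ (Icc (-(n:ℝ)) (n:ℝ))) = 1 := by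
      rw [← hdir.measure_iUnion, hun]
      simp [hμ]
    have hlt : ENNReal.ofReal ((3:ℝ)/4) < ⨆ n : ℕ, μ (Icc (-(n:ℝ)) (n:ℝ)) := by
      rw [hsup]
      exact ENNReal.ofReal_lt_one.mpr (by norm_num)
    obtain ⟨n, hn⟩ := lt_iSup_iff.mp hlt
    refine ⟨(n:ℝ) + 1, by positivity, ?_⟩
    have hsub : Icc (-(n:ℝ)) (n:ℝ) ⊆ Icc (-((n:ℝ)+1)) ((n:ℝ)+1) := by
      apply Icc_subset_Icc <;> linarith
    have hmono : μ (Icc (-(n:ℝ)) (n:ℝ)) ≤ μ (Icc (-((n:ℝ)+1)) ((n:ℝ)+1)) := measure_mono hsub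
    have happ := gaussianReal_apply_eq_integral 0 hv (Icc (-((n:ℝ)+1)) ((n:ℝ)+1))
    rw [← hμ] at happ
    have h34 : (3:ℝ)/4 ≤ ∫ x in Icc (-((n:ℝ)+1)) ((n:ℝ)+1), gaussianPDFReal 0 (varY d) x := by
      rw [← ENNReal.ofReal_le_ofReal_iff (integral_nonneg fun x => gaussianPDFReal_nonneg _ _ x)]
      rw [← happ]; exact le_trans hn.le hmono
    simpa [ρY] using h34
  set c₀ : ℝ := ∫ x in Icc (-w) w, ρY d x with hc₀
  have hc₀nn : 0 ≤ c₀ := integral_nonneg fun x => ρY_nonneg x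
  set q : ℝ := (d:ℝ) * c₀ with hqdef
  have hq : (3:ℝ)/2 ≤ q := by
    have : (2:ℝ) * (3/4) ≤ (d:ℝ) * c₀ := by
      apply mul_le_mul hd2 hw (by norm_num) (by linarith)
    linarith
  have hq1 : (1:ℝ) < q := by linarith
  -- K₀ and δ
  set K₀ : ℝ := max ((d:ℝ)*(hstar + w)) (max (2*w+1) hstar) with hK₀
  have hK₀h : hstar ≤ K₀ := le_trans (le_max_right _ _) (le_max_right _ _)
  have hK₀w : 2*w+1 ≤ K₀ := le_trans (le_max_left _ _) (le_max_right _ _)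
  have hK₀dw : (d:ℝ)*(hstar + w) ≤ K₀ := le_max_left _ _
  obtain ⟨x₀, hx₀mem, hx₀min⟩ := (isCompact_Icc (a := hstar) (b := K₀)).exists_isMinOn
    ⟨hstar, by constructor <;> [exact le_refl _; exact hK₀h]⟩
    (hcrit.cont.mono Icc_subset_Ici_self)
  set δ : ℝ := χ x₀ with hδdef
  have hδ0 : 0 < δ := hcrit.pos x₀ hx₀mem.1
  -- the one-step estimate
  have step : ∀ b δ' : ℝ, 0 ≤ δ' → (d:ℝ)*(hstar + w) ≤ b → hstar ≤ b →
      (∀ x, b/(d:ℝ) - w ≤ x → x ≤ b/(d:ℝ) + w → δ' ≤ χ x) → q * δ' ≤ χ b := by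
    intro b δ' hδ' hbw hbh hwin
    obtain ⟨hint, hval⟩ := eigen_integral hd hcrit hbh
    have hbd : hstar + w ≤ b/(d:ℝ) := (le_div_iff₀ hd0).mpr (by linarith [hbw])
    have hsub : Icc (b/(d:ℝ) - w) (b/(d:ℝ) + w) ⊆ Ici hstar := by
      intro x hx
      rw [mem_Ici]
      have := hx.1
      simp only [mem_Icc] at hx
      linarith [hx.1]
    have htrans : ∫ x in Icc (b/(d:ℝ) - w) (b/(d:ℝ) + w), ρY d (x - b/(d:ℝ)) = c₀ := by
      rw [integral_Icc_eq_integral_Ioc,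
        ← intervalIntegral.integral_of_le (by linarith : b/(d:ℝ) - w ≤ b/(d:ℝ) + w)]
      rw [intervalIntegral.integral_comp_sub_right (fun x => ρY d x) (b/(d:ℝ))]
      have e1 : b/(d:ℝ) - w - b/(d:ℝ) = -w := by ring
      have e2 : b/(d:ℝ) + w - b/(d:ℝ) = w := by ring
      rw [e1, e2]
      rw [intervalIntegral.integral_of_le (by linarith : -w ≤ w),
        ← integral_Icc_eq_integral_Ioc]
    have hint2 : IntegrableOn (fun x => χ x * ρY d (x - b/(d:ℝ)))
        (Icc (b/(d:ℝ) - w) (b/(d:ℝ) + w)) volume := hint.mono_set hsub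
    have hint1 : IntegrableOn (fun x => δ' * ρY d (x - b/(d:ℝ)))
        (Icc (b/(d:ℝ) - w) (b/(d:ℝ) + w)) volume := by
      apply Continuous.integrableOn_Icc
      exact continuous_const.mul (continuous_ρY.comp (continuous_id.sub continuous_const))
    have hmono1 : ∫ x in Icc (b/(d:ℝ) - w) (b/(d:ℝ) + w), δ' * ρY d (x - b/(d:ℝ)) ≤
        ∫ x in Icc (b/(d:ℝ) - w) (b/(d:ℝ) + w), χ x * ρY d (x - b/(d:ℝ)) := by
      apply setIntegral_mono_on hint1 hint2 measurableSet_Icc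
      intro x hx
      simp only [mem_Icc] at hx
      exact mul_le_mul_of_nonneg_right (hwin x hx.1 hx.2) (ρY_nonneg _)
    have hmono2 : ∫ x in Icc (b/(d:ℝ) - w) (b/(d:ℝ) + w), χ x * ρY d (x - b/(d:ℝ)) ≤
        ∫ x in Ici hstar, χ x * ρY d (x - b/(d:ℝ)) := by
      apply setIntegral_mono_set hint
      · exact ae_of_all _ fun x => mul_nonneg (hcrit.nonneg x) (ρY_nonneg _)
      · exact HasSubset.Subset.eventuallyLE hsub
    have hfirst : ∫ x in Icc (b/(d:ℝ) - w) (b/(d:ℝ) + w), δ' * ρY d (x - b/(d:ℝ))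
        = δ' * c₀ := by
      rw [integral_const_mul, htrans]
    have : δ' * c₀ ≤ χ b / (d:ℝ) := by
      rw [← hval, ← hfirst]
      exact le_trans hmono1 hmono2
    calc q * δ' = (d:ℝ) * (δ' * c₀) := by rw [hqdef]; ring
    _ ≤ (d:ℝ) * (χ b / (d:ℝ)) := by
        apply mul_le_mul_of_nonneg_left this (le_of_lt hd0)
    _ = χ b := by field_simp
  -- lower bound δ on [hstar, ∞)
  have base : ∀ j : ℕ, ∀ b : ℝ, hstar ≤ b → b ≤ K₀ + j → δ ≤ χ b := by
    intro j
    induction j with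
    | zero =>
      intro b hb1 hb2
      exact hx₀min ⟨hb1, by simpa using hb2⟩
    | succ j ih =>
      intro b hb1 hb2
      by_cases hble : b ≤ K₀ + j
      · exact ih b hb1 hble
      push_neg at hble
      have hbK : K₀ ≤ b := by
        have : (0:ℝ) ≤ j := Nat.cast_nonneg j
        linarith
      have hb0 : 0 < b := by linarith [hK₀w, hw0]
      have hbd2 : b/(d:ℝ) ≤ b/2 :=
        div_le_div_of_nonneg_left (le_of_lt hb0) (by norm_num) hd2
      have hwin : ∀ x, b/(d:ℝ) - w ≤ x → x ≤ b/(d:ℝ) + w → δ ≤ χ x := by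
        intro x hx1 hx2
        have hbw : hstar + w ≤ b/(d:ℝ) :=
          (le_div_iff₀ hd0).mpr (by linarith [hK₀dw, hbK])
        have hxh : hstar ≤ x := by linarith
        apply ih x hxh
        have hcast : (j:ℝ) + 1 = ((j+1 : ℕ) : ℝ) := by push_cast; ring
        have hble2 : b ≤ K₀ + j + 1 := by
          rw [show K₀ + (j:ℝ) + 1 = K₀ + ((j:ℝ)+1) by ring, hcast]
          exact hb2
        -- x ≤ b/d + w ≤ b/2 + w ≤ (K₀+j+1)/2 + w ≤ K₀ + j
        have : b/2 + w ≤ K₀ + j := by linarith [hK₀w]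
        linarith
      have hstep := step b δ (le_of_lt hδ0) (le_trans hK₀dw hbK) hb1 hwin
      nlinarith
  have L1 : ∀ b, hstar ≤ b → δ ≤ χ b := by
    intro b hb
    apply base ⌈b - K₀⌉₊ b hb
    have := Nat.le_ceil (b - K₀)
    have h2 : (⌈b - K₀⌉₊ : ℝ) = ((⌈b - K₀⌉₊ : ℕ) : ℝ) := rfl
    calc b = K₀ + (b - K₀) := by ring
    _ ≤ K₀ + ⌈b - K₀⌉₊ := by
        have := Nat.le_ceil (b - K₀)
        linarith [this]
  refine ⟨δ, hδ0, L1, ?_⟩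
  -- growth to infinity
  let Bs : ℕ → ℝ := fun j => Nat.rec K₀ (fun _ B => (d:ℝ) * (B + w)) j
  have hBs0 : Bs 0 = K₀ := rfl
  have hBsS : ∀ j, Bs (j+1) = (d:ℝ) * (Bs j + w) := fun j => rfl
  have hBsK : ∀ j, K₀ ≤ Bs j := by
    intro j
    induction j with
    | zero => exact le_refl _
    | succ j ih =>
      rw [hBsS]
      nlinarith [hw0, hK₀w]
  have L2 : ∀ j : ℕ, ∀ b : ℝ, Bs j ≤ b → q^j * δ ≤ χ b := by
    intro j
    induction j with
    | zero =>
      intro b hb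
      rw [pow_zero, one_mul]
      exact L1 b (le_trans hK₀h (le_trans (hBsK 0) hb))
    | succ j ih =>
      intro b hb
      rw [hBsS] at hb
      have hBjK := hBsK j
      have hBj0 : 0 < Bs j := by linarith [hK₀w, hw0]
      have hq' : q ^ (j+1) * δ = q * (q^j * δ) := by ring
      rw [hq']
      apply step b (q^j * δ) (by positivity) ?_ ?_ ?_
      · apply le_trans _ hb
        apply mul_le_mul_of_nonneg_left _ (le_of_lt hd0)
        have : hstar ≤ Bs j := le_trans hK₀h hBjK
        linarith
      · have : hstar + w ≤ Bs j + w := by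
          have : hstar ≤ Bs j := le_trans hK₀h hBjK
          linarith
        nlinarith [hd0, hw0, le_trans hK₀h hBjK]
      · intro x hx1 hx2
        apply ih x
        have hbd : Bs j + w ≤ b/(d:ℝ) := (le_div_iff₀ hd0).mpr (by linarith [hb])
        linarith
  intro M
  obtain ⟨j, hj⟩ := pow_unbounded_of_one_lt (M / δ) hq1
  refine ⟨Bs j, fun b hb => ?_⟩
  have h1 : M < q^j * δ := by
    rw [div_lt_iff₀ hδ0] at hj
    linarith
  exact lt_of_lt_of_le h1 (L2 j b hb)

end Chi
set_option linter.unusedSectionVars false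

section Prob

variable {Ω : Type} [MeasurableSpace Ω]

/-- The (extended-real) weight `χ(φ_x) 1_{x ∈ cluster}`. -/
def cIndE (d : ℕ) (hstar a : ℝ) (χ : ℝ → ℝ) (Y : V d → Ω → ℝ) (x : V d) (ω : Ω) : ℝ≥0∞ :=
  if x ∈ cluster d hstar (field d a fun v => Y v ω)
  then ENNReal.ofReal (χ (field d a (fun v => Y v ω) x)) else 0

/-- The martingale `M_n = ∑_{x ∈ Z_n} χ(φ_x)`. -/
def MnE (d : ℕ) (hstar a : ℝ) (χ : ℝ → ℝ) (Y : V d → Ω → ℝ) (n : ℕ) (ω : Ω) : ℝ≥0∞ :=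
  ∑ x ∈ T d n, cIndE d hstar a χ Y x ω

/-- Forward vertices of depth `1, …, n`. -/
def SS (d : ℕ) (n : ℕ) : Finset (V d) := (Finset.range n).biUnion fun k => T d (k+1)

/-- The configuration space of innovations up to depth `n`. -/
abbrev Cfg (d n : ℕ) : Type := ((SS d n : Finset (V d)) : Type) → ℝ

/-- The tuple of innovations up to depth `n`. -/
def vecn (d : ℕ) (Y : V d → Ω → ℝ) (n : ℕ) (ω : Ω) : Cfg d n :=
  fun z => Y z.1 ω

/-- Extending a tuple on `SS d n` by zero. -/
def extend (d n : ℕ) (v : Cfg d n) : V d → ℝ :=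
  fun x => if h : x ∈ SS d n then v ⟨x, h⟩ else 0

variable {d : ℕ} {hstar a : ℝ} {χ : ℝ → ℝ}

lemma mem_SS_iff {n : ℕ} {z : V d} :
    z ∈ SS d n ↔ 1 ≤ depth d z ∧ depth d z ≤ n ∧ z ∈ forward d := by
  simp only [SS, Finset.mem_biUnion, Finset.mem_range, mem_T_iff]
  constructor
  · rintro ⟨k, hk, hdz, hfz⟩
    exact ⟨by omega, by omega, hfz⟩
  · rintro ⟨h1, h2, hfz⟩
    exact ⟨depth d z - 1, by omega, by omega, hfz⟩

lemma measurable_vecn (Y : V d → Ω → ℝ) (hY : ∀ x, Measurable (Y x)) (n : ℕ) :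
    Measurable (vecn d Y n) :=
  measurable_pi_lambda _ fun z => hY z.1

lemma field_congr {a : ℝ} {ω₁ ω₂ : V d → ℝ} {x : V d}
    (h : ∀ z ∈ pathFromRoot d x, z ≠ none → ω₁ z = ω₂ z) :
    field d a ω₁ x = field d a ω₂ x := by
  cases x with
  | none => rfl
  | some p =>
    obtain ⟨i, l⟩ := p
    simp only [field]
    congr 1
    apply Finset.sum_congr rfl
    intro k hk
    rw [Finset.mem_range] at hk
    have hz : (some (i, l.take k) : V d) ∈ pathFromRoot d (some (i, l)) := by
      simp only [pathFromRoot, List.mem_cons, List.mem_map, List.mem_range]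
      exact Or.inr ⟨k, hk, rfl⟩
    rw [h _ hz (by simp)]

lemma mem_pathFromRoot_cases {x z : V d} (hz : z ∈ pathFromRoot d x) :
    z = none ∨ (1 ≤ depth d z ∧ depth d z ≤ depth d x ∧ (x ∈ forward d → z ∈ forward d)) := by
  cases x with
  | none =>
    left
    simpa [pathFromRoot] using hz
  | some p =>
    obtain ⟨i, l⟩ := p
    simp only [pathFromRoot, List.mem_cons, List.mem_map, List.mem_range] at hz
    rcases hz with rfl | ⟨k, hk, rfl⟩
    · exact Or.inl rfl
    · right
      refine ⟨by simp [depth], ?_, fun hf => hf⟩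
      simp only [depth, Option.elim]
      have hlt : (l.take k).length = min k l.length := List.length_take
      omega

lemma field_extend_eq {Y : V d → Ω → ℝ} {n : ℕ} {ω : Ω} {z : V d}
    (h1 : depth d z ≤ n) (h2 : z ∈ forward d) :
    field d a (extend d n (vecn d Y n ω)) z = field d a (fun v => Y v ω) z := by
  apply field_congr
  intro u hu hun
  rcases mem_pathFromRoot_cases hu with rfl | ⟨hu1, hu2, hu3⟩
  · exact absurd rfl hun
  · have huS : u ∈ SS d n := mem_SS_iff.mpr ⟨hu1, le_trans hu2 h1, hu3 h2⟩
    simp only [extend, vecn, huS, dif_pos]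

lemma field_extend_eq_path {Y : V d → Ω → ℝ} {n : ℕ} {ω : Ω} {x z : V d}
    (hdep : depth d x ≤ n) (hfx : x ∈ forward d) (hz : z ∈ pathFromRoot d x) :
    field d a (extend d n (vecn d Y n ω)) z = field d a (fun v => Y v ω) z := by
  rcases mem_pathFromRoot_cases hz with rfl | ⟨h1, h2, h3⟩
  · rfl
  · exact field_extend_eq (le_trans h2 hdep) (h3 hfx)

/-- `cIndE` written as a function of the truncated configuration. -/
def cIndOf (d n : ℕ) (hstar a : ℝ) (χ : ℝ → ℝ) (x : V d)
    (v : Cfg d n) : ℝ≥0∞ :=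
  if ∀ z ∈ pathFromRoot d x, hstar ≤ field d a (extend d n v) z
  then ENNReal.ofReal (χ (field d a (extend d n v) x)) else 0

def MnOf (d n : ℕ) (hstar a : ℝ) (χ : ℝ → ℝ) (k : ℕ)
    (v : Cfg d n) : ℝ≥0∞ :=
  ∑ x ∈ T d k, cIndOf d n hstar a χ x v

lemma cIndOf_vecn {Y : V d → Ω → ℝ} {n k : ℕ} {ω : Ω} {x : V d}
    (hx : x ∈ T d k) (hk : k ≤ n) :
    cIndOf d n hstar a χ x (vecn d Y n ω) = cIndE d hstar a χ Y x ω := by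
  obtain ⟨hdx, hfx⟩ := mem_T_iff.mp hx
  have hdep : depth d x ≤ n := by omega
  have hcond : (∀ z ∈ pathFromRoot d x, hstar ≤ field d a (extend d n (vecn d Y n ω)) z)
      ↔ x ∈ cluster d hstar (field d a fun v => Y v ω) := by
    unfold cluster
    simp only [Set.mem_setOf_eq]
    apply forall₂_congr
    intro z hz
    rw [field_extend_eq_path hdep hfx hz]
  unfold cIndOf cIndE
  by_cases hc : x ∈ cluster d hstar (field d a fun v => Y v ω)
  · rw [if_pos (hcond.mpr hc), if_pos hc,
      field_extend_eq_path hdep hfx (mem_pathFromRoot_self x)]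
  · rw [if_neg (fun hh => hc (hcond.mp hh)), if_neg hc]

lemma MnOf_vecn {Y : V d → Ω → ℝ} {n k : ℕ} {ω : Ω} (hk : k ≤ n) :
    MnOf d n hstar a χ k (vecn d Y n ω) = MnE d hstar a χ Y k ω := by
  unfold MnOf MnE
  exact Finset.sum_congr rfl fun x hx => cIndOf_vecn hx hk

end Prob
section Prob2

set_option linter.unusedSectionVars false

variable {Ω : Type} [MeasurableSpace Ω]
variable {d : ℕ} {hstar a : ℝ} {χ : ℝ → ℝ}

lemma measurable_fieldω {Y : V d → Ω → ℝ} (hY : ∀ x, Measurable (Y x)) (x : V d) :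
    Measurable fun ω => field d a (fun v => Y v ω) x := by
  cases x with
  | none => exact measurable_const
  | some p =>
    obtain ⟨i, l⟩ := p
    simp only [field]
    apply Measurable.add measurable_const
    apply Finset.measurable_sum
    intro k _
    exact (hY _).div_const _

lemma measurableSet_allPath {α : Type*} [MeasurableSpace α] (h : ℝ) (L : List (V d))
    (F : V d → α → ℝ) (hF : ∀ z, Measurable (F z)) :
    MeasurableSet {u : α | ∀ z ∈ L, h ≤ F z u} := by
  induction L with
  | nil => simp
  | cons b L ih =>
    have : {u : α | ∀ z ∈ b :: L, h ≤ F z u}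
        = {u : α | h ≤ F b u} ∩ {u : α | ∀ z ∈ L, h ≤ F z u} := by
      ext u; simp [List.forall_mem_cons]
    rw [this]
    exact (measurableSet_le measurable_const (hF b)).inter ih

lemma measurable_cIndE {Y : V d → Ω → ℝ} (hY : ∀ x, Measurable (Y x))
    (hχ : Measurable χ) (x : V d) :
    Measurable (cIndE d hstar a χ Y x) := by
  unfold cIndE
  have hset : MeasurableSet {ω : Ω | x ∈ cluster d hstar (field d a fun v => Y v ω)} := by
    have heq : {ω : Ω | x ∈ cluster d hstar (field d a fun v => Y v ω)}
        = {ω : Ω | ∀ z ∈ pathFromRoot d x, hstar ≤ field d a (fun v => Y v ω) z} := rfl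
    rw [heq]
    exact measurableSet_allPath hstar (pathFromRoot d x) _ fun z => measurable_fieldω hY z
  exact Measurable.ite hset ((hχ.comp (measurable_fieldω hY x)).ennreal_ofReal)
    measurable_const

lemma measurable_MnE {Y : V d → Ω → ℝ} (hY : ∀ x, Measurable (Y x))
    (hχ : Measurable χ) (n : ℕ) :
    Measurable (MnE d hstar a χ Y n) := by
  unfold MnE
  exact Finset.measurable_sum _ fun x _ => measurable_cIndE hY hχ x

lemma measurable_extend_apply {n : ℕ} (z : V d) :
    Measurable fun v : Cfg d n => extend d n v z := by
  unfold extend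
  split_ifs with h
  · exact measurable_pi_apply _
  · exact measurable_const

lemma measurable_field_extend {n : ℕ} (x : V d) :
    Measurable fun v : Cfg d n => field d a (extend d n v) x := by
  cases x with
  | none => exact measurable_const
  | some p =>
    obtain ⟨i, l⟩ := p
    simp only [field]
    apply Measurable.add measurable_const
    apply Finset.measurable_sum
    intro k _
    exact (measurable_extend_apply _).div_const _

lemma measurable_cIndOf (hχ : Measurable χ) {n : ℕ} (x : V d) :
    Measurable (cIndOf d n hstar a χ x) := by
  unfold cIndOf
  apply Measurable.ite
  · exact measurableSet_allPath hstar (pathFromRoot d x) _ fun z => measurable_field_extend z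
  · exact (hχ.comp (measurable_field_extend x)).ennreal_ofReal
  · exact measurable_const

lemma measurable_MnOf (hχ : Measurable χ) {n : ℕ} (k : ℕ) :
    Measurable (MnOf d n hstar a χ k) :=
  Finset.measurable_sum _ fun x _ => measurable_cIndOf hχ x

lemma child_ne_none (x : V d) (j : Fin d) : child d x j ≠ none := by
  cases x with
  | none => simp [child]
  | some p => obtain ⟨i, l⟩ := p; simp [child]

lemma measurable_iteχ (hχ : Measurable χ) (b : ℝ) :
    Measurable fun u : ℝ =>
      (if hstar ≤ b + u then ENNReal.ofReal (χ (b + u)) else 0) := by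
  apply Measurable.ite
  · exact measurableSet_le measurable_const (measurable_const.add measurable_id)
  · exact (hχ.comp (measurable_const.add measurable_id)).ennreal_ofReal
  · exact measurable_const

/-- The one-child step: integrating out the innovation at `child x j`. -/
lemma key_child (hd : 2 ≤ d) (hcrit : IsCriticalPair d hstar χ)
    {P : Measure Ω} {Y : V d → Ω → ℝ} (hEnv : IsGFFEnv d P Y) (n : ℕ)
    (g : Cfg d n → ℝ≥0∞) (hg : Measurable g)
    {x : V d} (hx : x ∈ T d n) (j : Fin d) :
    ∫⁻ ω, cIndE d hstar a χ Y (child d x j) ω * g (vecn d Y n ω) ∂P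
      = (∫⁻ ω, cIndE d hstar a χ Y x ω * g (vecn d Y n ω) ∂P) / (d : ℝ≥0∞) := by
  haveI : IsProbabilityMeasure P := hEnv.prob
  have hχ := chi_meas hcrit
  have hd0 : (0:ℝ) < (d:ℝ) := dpos hd
  set y := child d x j with hy
  have hyT : y ∈ T d (n+1) := mem_T_child hx j
  have hdx : depth d x = n := (mem_T_iff.mp hx).1
  have hfx : x ∈ forward d := (mem_T_iff.mp hx).2
  have hynS : y ∉ SS d n := by
    intro hmem
    have h5 := (mem_SS_iff.mp hmem).2.1
    have h6 := (mem_T_iff.mp hyT).1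
    omega
  set F : Cfg d n × ℝ → ℝ≥0∞ :=
    fun p => (if (∀ z ∈ pathFromRoot d x, hstar ≤ field d a (extend d n p.1) z) ∧
                 hstar ≤ field d a (extend d n p.1) x / (d:ℝ) + p.2
              then ENNReal.ofReal (χ (field d a (extend d n p.1) x / (d:ℝ) + p.2)) else 0)
              * g p.1 with hF
  -- pointwise identification
  have hpt : ∀ ω, cIndE d hstar a χ Y y ω * g (vecn d Y n ω) = F (vecn d Y n ω, Y y ω) := by
    intro ω
    have h1 : field d a (fun v => Y v ω) y
        = field d a (fun v => Y v ω) x / (d:ℝ) + Y y ω := field_child hd a _ x j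
    have h3 : field d a (extend d n (vecn d Y n ω)) x = field d a (fun v => Y v ω) x :=
      field_extend_eq (le_of_eq hdx) hfx
    have h4 : (∀ z ∈ pathFromRoot d x, hstar ≤ field d a (extend d n (vecn d Y n ω)) z)
        ↔ x ∈ cluster d hstar (field d a fun v => Y v ω) := by
      unfold cluster
      simp only [Set.mem_setOf_eq]
      apply forall₂_congr
      intro z hz
      rw [field_extend_eq_path (le_of_eq hdx) hfx hz]
    have hbeta : F (vecn d Y n ω, Y y ω)
        = (if (∀ z ∈ pathFromRoot d x, hstar ≤ field d a (extend d n (vecn d Y n ω)) z) ∧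
              hstar ≤ field d a (extend d n (vecn d Y n ω)) x / (d:ℝ) + Y y ω
           then ENNReal.ofReal
              (χ (field d a (extend d n (vecn d Y n ω)) x / (d:ℝ) + Y y ω)) else 0)
           * g (vecn d Y n ω) := rfl
    rw [hbeta, h3, ← h1]
    congr 1
    unfold cIndE
    apply if_congr _ rfl rfl
    rw [mem_cluster_child]
    exact and_congr h4.symm Iff.rfl
  -- measurability of F
  have hfe : Measurable fun p : Cfg d n × ℝ =>
      field d a (extend d n p.1) x := (measurable_field_extend x).comp measurable_fst
  have hval : Measurable fun p : Cfg d n × ℝ =>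
      field d a (extend d n p.1) x / (d:ℝ) + p.2 :=
    (hfe.div_const _).add measurable_snd
  have hcondset : MeasurableSet {p : Cfg d n × ℝ |
      (∀ z ∈ pathFromRoot d x, hstar ≤ field d a (extend d n p.1) z) ∧
      hstar ≤ field d a (extend d n p.1) x / (d:ℝ) + p.2} := by
    apply MeasurableSet.inter
    · exact (measurableSet_allPath hstar (pathFromRoot d x)
        (fun z v => field d a (extend d n v) z)
        (fun z => measurable_field_extend z)).preimage measurable_fst
    · exact measurableSet_le measurable_const hval
  have hFm : Measurable F := by
    rw [hF]
    apply Measurable.mul _ (hg.comp measurable_fst)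
    exact Measurable.ite hcondset ((hχ.comp hval).ennreal_ofReal) measurable_const
  -- joint law is a product
  have hIndep : IndepFun (vecn d Y n) (Y y) P := by
    have h2 := hEnv.indep.indepFun_finset (SS d n) {y}
      (Finset.disjoint_singleton_right.mpr hynS) hEnv.meas
    exact h2.comp measurable_id
      (measurable_pi_apply (⟨y, Finset.mem_singleton_self y⟩ : (({y} : Finset (V d)) : Type)))
  have hmap : P.map (fun ω => (vecn d Y n ω, Y y ω))
      = (P.map (vecn d Y n)).prod (gaussianReal 0 (varY d)) := by
    rw [(indepFun_iff_map_prod_eq_prod_map_map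
      (measurable_vecn Y hEnv.meas n).aemeasurable (hEnv.meas y).aemeasurable).mp hIndep,
      hEnv.law y, if_neg (child_ne_none x j)]
  -- inner gaussian integral
  have hinner : ∀ v : Cfg d n, ∫⁻ u, F (v, u) ∂(gaussianReal 0 (varY d))
      = cIndOf d n hstar a χ x v / (d:ℝ≥0∞) * g v := by
    intro v
    by_cases hc : ∀ z ∈ pathFromRoot d x, hstar ≤ field d a (extend d n v) z
    · have hb : hstar ≤ field d a (extend d n v) x := hc x (mem_pathFromRoot_self x)
      have hptu : ∀ u : ℝ, F (v, u)
          = (if hstar ≤ field d a (extend d n v) x / (d:ℝ) + u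
             then ENNReal.ofReal (χ (field d a (extend d n v) x / (d:ℝ) + u)) else 0)
             * g v := by
        intro u
        have hbeta : F (v, u)
            = (if (∀ z ∈ pathFromRoot d x, hstar ≤ field d a (extend d n v) z) ∧
                  hstar ≤ field d a (extend d n v) x / (d:ℝ) + u
               then ENNReal.ofReal (χ (field d a (extend d n v) x / (d:ℝ) + u)) else 0)
               * g v := rfl
        rw [hbeta]
        congr 1
        exact if_congr (and_iff_right hc) rfl rfl
      rw [lintegral_congr hptu, lintegral_mul_const _ (measurable_iteχ hχ _),
        gauss_step hd hcrit hb]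
      unfold cIndOf
      rw [if_pos hc]
      congr 1
      rw [ENNReal.ofReal_div_of_pos hd0, ENNReal.ofReal_natCast]
    · have hzero : ∀ u : ℝ, F (v, u) = 0 := by
        intro u
        have hbeta : F (v, u)
            = (if (∀ z ∈ pathFromRoot d x, hstar ≤ field d a (extend d n v) z) ∧
                  hstar ≤ field d a (extend d n v) x / (d:ℝ) + u
               then ENNReal.ofReal (χ (field d a (extend d n v) x / (d:ℝ) + u)) else 0)
               * g v := rfl
        rw [hbeta, if_neg (fun hh => hc hh.1), zero_mul]
      rw [lintegral_congr hzero, lintegral_zero]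
      unfold cIndOf
      rw [if_neg hc, ENNReal.zero_div, zero_mul]
  -- put everything together
  have hvecm := measurable_vecn Y hEnv.meas n
  haveI : IsProbabilityMeasure (P.map (vecn d Y n)) :=
    Measure.isProbabilityMeasure_map hvecm.aemeasurable
  calc ∫⁻ ω, cIndE d hstar a χ Y y ω * g (vecn d Y n ω) ∂P
      = ∫⁻ ω, F (vecn d Y n ω, Y y ω) ∂P := lintegral_congr hpt
    _ = ∫⁻ p, F p ∂(P.map fun ω => (vecn d Y n ω, Y y ω)) :=
        (lintegral_map hFm (hvecm.prodMk (hEnv.meas y))).symm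
    _ = ∫⁻ p, F p ∂((P.map (vecn d Y n)).prod (gaussianReal 0 (varY d))) := by rw [hmap]
    _ = ∫⁻ v, ∫⁻ u, F (v, u) ∂(gaussianReal 0 (varY d)) ∂(P.map (vecn d Y n)) :=
        lintegral_prod F hFm.aemeasurable
    _ = ∫⁻ v, cIndOf d n hstar a χ x v / (d:ℝ≥0∞) * g v ∂(P.map (vecn d Y n)) :=
        lintegral_congr hinner
    _ = ∫⁻ ω, cIndOf d n hstar a χ x (vecn d Y n ω) / (d:ℝ≥0∞) * g (vecn d Y n ω) ∂P := by
        rw [lintegral_map _ hvecm]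
        exact ((measurable_cIndOf hχ x).div_const _).mul hg
    _ = ∫⁻ ω, cIndE d hstar a χ Y x ω * g (vecn d Y n ω) * (d:ℝ≥0∞)⁻¹ ∂P := by
        apply lintegral_congr
        intro ω
        rw [cIndOf_vecn hx (le_refl n)]
        rw [div_eq_mul_inv, mul_right_comm]
    _ = (∫⁻ ω, cIndE d hstar a χ Y x ω * g (vecn d Y n ω) ∂P) / (d:ℝ≥0∞) := by
        rw [div_eq_mul_inv]
        exact lintegral_mul_const _ ((measurable_cIndE hEnv.meas hχ x).mul (hg.comp hvecm))

/-- The one-step martingale identity. -/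
lemma key_step (hd : 2 ≤ d) (hcrit : IsCriticalPair d hstar χ)
    {P : Measure Ω} {Y : V d → Ω → ℝ} (hEnv : IsGFFEnv d P Y) (n : ℕ)
    (g : Cfg d n → ℝ≥0∞) (hg : Measurable g) :
    ∫⁻ ω, MnE d hstar a χ Y (n+1) ω * g (vecn d Y n ω) ∂P
      = ∫⁻ ω, MnE d hstar a χ Y n ω * g (vecn d Y n ω) ∂P := by
  haveI : IsProbabilityMeasure P := hEnv.prob
  have hχ := chi_meas hcrit
  have hd0 : (d:ℝ≥0∞) ≠ 0 := by
    simp only [ne_eq, Nat.cast_eq_zero]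
    omega
  have hdtop : (d:ℝ≥0∞) ≠ ⊤ := ENNReal.natCast_ne_top d
  have hptsum : ∀ ω, MnE d hstar a χ Y (n+1) ω * g (vecn d Y n ω)
      = ∑ x ∈ T d n, ∑ j : Fin d, cIndE d hstar a χ Y (child d x j) ω * g (vecn d Y n ω) := by
    intro ω
    unfold MnE
    rw [Finset.sum_mul, sum_T_succ n (fun y => cIndE d hstar a χ Y y ω * g (vecn d Y n ω))]
  have hmeas1 : ∀ x ∈ T d n, Measurable fun ω =>
      ∑ j : Fin d, cIndE d hstar a χ Y (child d x j) ω * g (vecn d Y n ω) := by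
    intro x _
    apply Finset.measurable_sum
    intro j _
    exact (measurable_cIndE hEnv.meas hχ _).mul (hg.comp (measurable_vecn Y hEnv.meas n))
  calc ∫⁻ ω, MnE d hstar a χ Y (n+1) ω * g (vecn d Y n ω) ∂P
      = ∫⁻ ω, ∑ x ∈ T d n, ∑ j : Fin d,
          cIndE d hstar a χ Y (child d x j) ω * g (vecn d Y n ω) ∂P := lintegral_congr hptsum
    _ = ∑ x ∈ T d n, ∫⁻ ω, ∑ j : Fin d,
          cIndE d hstar a χ Y (child d x j) ω * g (vecn d Y n ω) ∂P :=
        lintegral_finset_sum _ hmeas1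
    _ = ∑ x ∈ T d n, ∫⁻ ω, cIndE d hstar a χ Y x ω * g (vecn d Y n ω) ∂P := by
        apply Finset.sum_congr rfl
        intro x hx
        have e1 : ∫⁻ ω, ∑ j : Fin d,
            cIndE d hstar a χ Y (child d x j) ω * g (vecn d Y n ω) ∂P
            = ∑ j : Fin d, ∫⁻ ω,
                cIndE d hstar a χ Y (child d x j) ω * g (vecn d Y n ω) ∂P :=
          lintegral_finset_sum _ (fun j _ =>
            (measurable_cIndE hEnv.meas hχ _).mul (hg.comp (measurable_vecn Y hEnv.meas n)))
        rw [e1]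
        have hone : ∀ j : Fin d, ∫⁻ ω, cIndE d hstar a χ Y (child d x j) ω
            * g (vecn d Y n ω) ∂P
            = (∫⁻ ω, cIndE d hstar a χ Y x ω * g (vecn d Y n ω) ∂P) / (d:ℝ≥0∞) :=
          fun j => key_child hd hcrit hEnv n g hg hx j
        rw [Finset.sum_congr rfl fun j _ => hone j, Finset.sum_const, Finset.card_univ,
          Fintype.card_fin, nsmul_eq_mul]
        exact ENNReal.mul_div_cancel' (fun h => absurd h hd0) (fun h => absurd h hdtop)
    _ = ∫⁻ ω, ∑ x ∈ T d n, cIndE d hstar a χ Y x ω * g (vecn d Y n ω) ∂P :=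
        (lintegral_finset_sum _ (fun x _ =>
          (measurable_cIndE hEnv.meas hχ x).mul (hg.comp (measurable_vecn Y hEnv.meas n)))).symm
    _ = ∫⁻ ω, MnE d hstar a χ Y n ω * g (vecn d Y n ω) ∂P := by
        apply lintegral_congr
        intro ω
        unfold MnE
        rw [Finset.sum_mul]

end Prob2
section Prob3

set_option linter.unusedSectionVars false

variable {Ω : Type} [MeasurableSpace Ω]
variable {d : ℕ} {hstar a : ℝ} {χ : ℝ → ℝ}

lemma MnE_zero {Y : V d → Ω → ℝ} (ha : hstar ≤ a) (ω : Ω) :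
    MnE d hstar a χ Y 0 ω = ENNReal.ofReal (χ a) := by
  unfold MnE
  rw [show T d 0 = {(none : V d)} from rfl, Finset.sum_singleton]
  unfold cIndE
  rw [if_pos (root_mem_cluster ha)]
  rfl

/-- The event that the martingale has exceeded level `lam` by time `m`. -/
def HSet (d : ℕ) (hstar a : ℝ) (χ : ℝ → ℝ) (Y : V d → Ω → ℝ) (lam : ℝ≥0∞) (m : ℕ) :
    Set Ω := {ω | ∃ k ≤ m, lam ≤ MnE d hstar a χ Y k ω}

lemma measurableSet_HSet {Y : V d → Ω → ℝ} (hY : ∀ x, Measurable (Y x))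
    (hχ : Measurable χ) (lam : ℝ≥0∞) (m : ℕ) :
    MeasurableSet (HSet d hstar a χ Y lam m) := by
  have heq : HSet d hstar a χ Y lam m
      = ⋃ k ∈ Finset.range (m+1), {ω : Ω | lam ≤ MnE d hstar a χ Y k ω} := by
    ext ω
    simp only [HSet, Set.mem_setOf_eq, Set.mem_iUnion, Finset.mem_range, Nat.lt_succ_iff,
      exists_prop]
  rw [heq]
  exact MeasurableSet.biUnion (Finset.range (m+1)).countable_toSet
    fun k _ => measurableSet_le measurable_const (measurable_MnE hY hχ k)

/-- The indicator (as a function of the depth-`≤ n` configuration) of the event that the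
martingale has stayed below `lam` up to time `n`. -/
def gComp (d n : ℕ) (hstar a : ℝ) (χ : ℝ → ℝ) (lam : ℝ≥0∞) : Cfg d n → ℝ≥0∞ :=
  fun v => if ∀ k ≤ n, MnOf d n hstar a χ k v < lam then 1 else 0

lemma measurable_gComp (hχ : Measurable χ) (lam : ℝ≥0∞) (n : ℕ) :
    Measurable (gComp d n hstar a χ lam) := by
  unfold gComp
  apply Measurable.ite _ measurable_const measurable_const
  have heq : {v : Cfg d n | ∀ k ≤ n, MnOf d n hstar a χ k v < lam}
      = ⋂ k ∈ Finset.range (n+1), {v : Cfg d n | MnOf d n hstar a χ k v < lam} := by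
    ext v
    simp only [Set.mem_setOf_eq, Set.mem_iInter, Finset.mem_range, Nat.lt_succ_iff]
  rw [heq]
  exact MeasurableSet.biInter (Finset.range (n+1)).countable_toSet
    fun k _ => measurableSet_lt (measurable_MnOf hχ k) measurable_const

lemma gComp_vecn {Y : V d → Ω → ℝ} (lam : ℝ≥0∞) (n : ℕ) (ω : Ω) :
    gComp d n hstar a χ lam (vecn d Y n ω)
      = if ω ∈ (HSet d hstar a χ Y lam n)ᶜ then 1 else 0 := by
  unfold gComp
  have hcond : (∀ k ≤ n, MnOf d n hstar a χ k (vecn d Y n ω) < lam)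
      ↔ ω ∈ (HSet d hstar a χ Y lam n)ᶜ := by
    simp only [Set.mem_compl_iff, HSet, Set.mem_setOf_eq, not_exists, not_and, not_le]
    constructor
    · intro hh k hk
      have h2 := hh k hk
      rwa [MnOf_vecn hk] at h2
    · intro hh k hk
      rw [MnOf_vecn hk]
      exact hh k hk
  exact if_congr hcond rfl rfl

lemma setLintegral_compl_HSet (hcrit : IsCriticalPair d hstar χ)
    {P : Measure Ω} {Y : V d → Ω → ℝ} (hEnv : IsGFFEnv d P Y)
    (lam : ℝ≥0∞) (n k : ℕ) :
    ∫⁻ ω in (HSet d hstar a χ Y lam n)ᶜ, MnE d hstar a χ Y k ω ∂P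
      = ∫⁻ ω, MnE d hstar a χ Y k ω * gComp d n hstar a χ lam (vecn d Y n ω) ∂P := by
  have hχ := chi_meas hcrit
  rw [← lintegral_indicator (measurableSet_HSet hEnv.meas hχ lam n).compl]
  apply lintegral_congr
  intro ω
  rw [Set.indicator_apply, gComp_vecn]
  by_cases hω : ω ∈ (HSet d hstar a χ Y lam n)ᶜ
  · rw [if_pos hω, if_pos hω, mul_one]
  · rw [if_neg hω, if_neg hω, mul_zero]

/-- The maximal-inequality induction. -/
lemma ind_bound (hd : 2 ≤ d) (hcrit : IsCriticalPair d hstar χ)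
    {P : Measure Ω} {Y : V d → Ω → ℝ} (hEnv : IsGFFEnv d P Y) (ha : hstar ≤ a)
    (lam : ℝ≥0∞) (m : ℕ) :
    lam * P (HSet d hstar a χ Y lam m)
      + ∫⁻ ω in (HSet d hstar a χ Y lam m)ᶜ, MnE d hstar a χ Y m ω ∂P
      ≤ ENNReal.ofReal (χ a) := by
  haveI : IsProbabilityMeasure P := hEnv.prob
  have hχ := chi_meas hcrit
  induction m with
  | zero =>
    by_cases hlam : lam ≤ ENNReal.ofReal (χ a)
    · have hH : HSet d hstar a χ Y lam 0 = Set.univ := by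
        ext ω
        simp only [HSet, Set.mem_setOf_eq, Set.mem_univ, iff_true]
        exact ⟨0, le_refl 0, by rw [MnE_zero ha]; exact hlam⟩
      rw [hH, Set.compl_univ, Measure.restrict_empty, lintegral_zero_measure,
        measure_univ, mul_one, add_zero]
      exact hlam
    · have hH : HSet d hstar a χ Y lam 0 = ∅ := by
        ext ω
        simp only [HSet, Set.mem_setOf_eq, Set.mem_empty_iff_false, iff_false, not_exists]
        rintro k ⟨hk, hc⟩
        have hk0 : k = 0 := Nat.le_zero.mp hk
        subst hk0
        rw [MnE_zero ha] at hc
        exact hlam hc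
      rw [hH, measure_empty, mul_zero, Set.compl_empty, Measure.restrict_univ, zero_add]
      have : ∀ ω : Ω, MnE d hstar a χ Y 0 ω = ENNReal.ofReal (χ a) := MnE_zero ha
      rw [lintegral_congr this, lintegral_const, measure_univ, mul_one]
  | succ m ih =>
    set A := HSet d hstar a χ Y lam m with hA
    set A' := HSet d hstar a χ Y lam (m+1) with hA'
    have hmA : MeasurableSet A := measurableSet_HSet hEnv.meas hχ lam m
    have hmA' : MeasurableSet A' := measurableSet_HSet hEnv.meas hχ lam (m+1)
    have hAA' : A ⊆ A' := by
      rintro ω ⟨k, hk, h⟩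
      exact ⟨k, by omega, h⟩
    have hDlam : ∀ ω ∈ A' \ A, lam ≤ MnE d hstar a χ Y (m+1) ω := by
      rintro ω ⟨⟨k, hk, h⟩, hnA⟩
      rcases Nat.lt_or_ge k (m+1) with hlt | hge
      · exact absurd ⟨k, by omega, h⟩ hnA
      · have : k = m + 1 := by omega
        rwa [this] at h
    have hsplit : P A' = P A + P (A' \ A) := by
      rw [measure_add_diff hmA.nullMeasurableSet A', Set.union_eq_self_of_subset_left hAA']
    have hDunion : (A' \ A) ∪ A'ᶜ = Aᶜ := by
      ext ω
      constructor
      · rintro (⟨_, h1⟩ | h2)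
        · exact h1
        · exact fun h1 => h2 (hAA' h1)
      · intro h1
        by_cases h2 : ω ∈ A'
        · exact Or.inl ⟨h2, h1⟩
        · exact Or.inr h2
    have hdisj : Disjoint (A' \ A) A'ᶜ :=
      Set.disjoint_of_subset_left Set.diff_subset (disjoint_compl_right)
    calc lam * P A' + ∫⁻ ω in A'ᶜ, MnE d hstar a χ Y (m+1) ω ∂P
        = lam * P A + lam * P (A' \ A) + ∫⁻ ω in A'ᶜ, MnE d hstar a χ Y (m+1) ω ∂P := by
          rw [hsplit, mul_add]
      _ ≤ lam * P A + (∫⁻ ω in A' \ A, MnE d hstar a χ Y (m+1) ω ∂P)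
            + ∫⁻ ω in A'ᶜ, MnE d hstar a χ Y (m+1) ω ∂P := by
          apply add_le_add_left (add_le_add_right _ _)
          rw [← setLIntegral_const (A' \ A) lam]
          exact setLIntegral_mono (measurable_MnE hEnv.meas hχ (m+1)) hDlam
      _ = lam * P A + ∫⁻ ω in (A' \ A) ∪ A'ᶜ, MnE d hstar a χ Y (m+1) ω ∂P := by
          rw [add_assoc, lintegral_union hmA'.compl hdisj]
      _ = lam * P A + ∫⁻ ω in Aᶜ, MnE d hstar a χ Y (m+1) ω ∂P := by rw [hDunion]
      _ = lam * P A + ∫⁻ ω in Aᶜ, MnE d hstar a χ Y m ω ∂P := by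
          rw [setLintegral_compl_HSet hcrit hEnv lam m (m+1),
            setLintegral_compl_HSet hcrit hEnv lam m m,
            key_step hd hcrit hEnv m _ (measurable_gComp hχ lam m)]
      _ ≤ ENNReal.ofReal (χ a) := ih

lemma global_bound (hd : 2 ≤ d) (hcrit : IsCriticalPair d hstar χ)
    {P : Measure Ω} {Y : V d → Ω → ℝ} (hEnv : IsGFFEnv d P Y) (ha : hstar ≤ a)
    (lam : ℝ≥0∞) :
    lam * P {ω | ∃ k, lam ≤ MnE d hstar a χ Y k ω} ≤ ENNReal.ofReal (χ a) := by
  have hun : {ω : Ω | ∃ k, lam ≤ MnE d hstar a χ Y k ω}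
      = ⋃ m, HSet d hstar a χ Y lam m := by
    ext ω
    simp only [Set.mem_setOf_eq, Set.mem_iUnion, HSet]
    constructor
    · rintro ⟨k, h⟩; exact ⟨k, k, le_refl k, h⟩
    · rintro ⟨m, k, _, h⟩; exact ⟨k, h⟩
  have hdir : Directed (· ⊆ ·) (HSet d hstar a χ Y lam) := by
    apply Monotone.directed_le
    intro m₁ m₂ hm
    rintro ω ⟨k, hk, h⟩
    exact ⟨k, by omega, h⟩
  rw [hun, hdir.measure_iUnion, ENNReal.mul_iSup]
  apply iSup_le
  intro m
  exact le_trans (le_add_right (le_refl _)) (ind_bound hd hcrit hEnv ha lam m)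

end Prob3
/-- Lemma `bounded_PhiZn`: for every `a ≥ h*` and `ε > 0` there are
`H < ∞` and `N < ∞` with `P_a[Φ_n ≤ H ∀ n] ≥ 1 − ε` and `P_a[|Z_n| ≤ N ∀ n] ≥ 1 − ε`,
where `Z_n` is the `n`-th generation of `C_o^{h*} ∩ 𝕋⁺` and `Φ_n = max_{x ∈ Z_n} φ_x`
(`max ∅ = −∞`, so `Φ_n ≤ H` means every `x ∈ Z_n` has `φ_x ≤ H`). -/
theorem bounded_field_and_generations {Ω : Type} [MeasurableSpace Ω] (d : ℕ) (hd : 2 ≤ d)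
    (P : Measure Ω) (Y : V d → Ω → ℝ) (hEnv : IsGFFEnv d P Y)
    (hstar : ℝ) (χ : ℝ → ℝ) (hcrit : IsCriticalPair d hstar χ)
    (a : ℝ) (ha : hstar ≤ a) (ε : ℝ) (hε : 0 < ε) :
    ∃ H : ℝ, ∃ N : ℕ,
      1 - ε ≤ (P {ω | ∀ n : ℕ, ∀ x ∈ gen d hstar a Y ω n,
          field d a (fun v => Y v ω) x ≤ H}).toReal ∧
      1 - ε ≤ (P {ω | ∀ n : ℕ, (gen d hstar a Y ω n).encard ≤ (N : ℕ∞)}).toReal := by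
  classical
  haveI : IsProbabilityMeasure P := hEnv.prob
  have hχm := chi_meas hcrit
  obtain ⟨δ, hδ0, hδlow, hgrow⟩ := chi_bounds hd hcrit
  have hχa0 : 0 ≤ χ a := hcrit.nonneg a
  set lamR : ℝ := (χ a + 1) / ε with hlamR
  have hlamR0 : 0 < lamR := by positivity
  set lam : ℝ≥0∞ := ENNReal.ofReal lamR with hlam
  obtain ⟨H, hH⟩ := hgrow lamR
  set N : ℕ := ⌈lamR / δ⌉₊ with hN
  set B : Set Ω := {ω | ∃ k, lam ≤ MnE d hstar a χ Y k ω} with hB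
  have hmB : MeasurableSet B := by
    have hBeq : B = ⋃ k : ℕ, {ω | lam ≤ MnE d hstar a χ Y k ω} := by
      ext ω; simp [hB]
    rw [hBeq]
    exact MeasurableSet.iUnion fun k =>
      measurableSet_le measurable_const (measurable_MnE hEnv.meas hχm k)
  have hgb := global_bound hd hcrit hEnv ha lam
  have hPB : P B ≤ ENNReal.ofReal ε := by
    have hlamne0 : lam ≠ 0 := by
      rw [hlam, ne_eq, ENNReal.ofReal_eq_zero, not_le]
      exact hlamR0
    have hlamnetop : lam ≠ ⊤ := ENNReal.ofReal_ne_top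
    have h1 : P B ≤ ENNReal.ofReal (χ a) / lam := by
      rw [ENNReal.le_div_iff_mul_le (Or.inl hlamne0) (Or.inl hlamnetop), mul_comm]
      exact hgb
    have h2 : ENNReal.ofReal (χ a) / lam = ENNReal.ofReal (χ a / lamR) := by
      rw [hlam, ENNReal.ofReal_div_of_pos hlamR0]
    have h3 : χ a / lamR ≤ ε := by
      rw [hlamR]
      rw [div_div_eq_mul_div, div_le_iff₀ (by linarith : (0:ℝ) < χ a + 1)]
      nlinarith
    calc P B ≤ ENNReal.ofReal (χ a) / lam := h1
      _ = ENNReal.ofReal (χ a / lamR) := h2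
      _ ≤ ENNReal.ofReal ε := ENNReal.ofReal_le_ofReal h3
  -- pointwise consequence on the complement of `B`
  have hgood : ∀ ω ∈ Bᶜ,
      (∀ n : ℕ, ∀ x ∈ gen d hstar a Y ω n, field d a (fun v => Y v ω) x ≤ H) ∧
      (∀ n : ℕ, (gen d hstar a Y ω n).encard ≤ (N:ℕ∞)) := by
    intro ω hω
    simp only [Set.mem_compl_iff, hB, Set.mem_setOf_eq, not_exists, not_le] at hω
    have hgenT : ∀ n : ℕ, gen d hstar a Y ω n
        = (((T d n).filter fun x =>
              x ∈ cluster d hstar (field d a fun v => Y v ω)) : Finset (V d)) := by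
      intro n
      ext x
      simp only [gen, fwdCluster, Set.mem_setOf_eq, Set.mem_inter_iff, Finset.coe_filter,
        mem_T_iff]
      tauto
    constructor
    · intro n x hx
      obtain ⟨⟨hcl, hfw⟩, hdep⟩ := hx
      have hxT : x ∈ T d n := mem_T_iff.mpr ⟨hdep, hfw⟩
      have hle : cIndE d hstar a χ Y x ω ≤ MnE d hstar a χ Y n ω := by
        unfold MnE
        exact Finset.single_le_sum (f := fun z => cIndE d hstar a χ Y z ω)
          (fun i _ => zero_le) hxT
      have heq : cIndE d hstar a χ Y x ω
          = ENNReal.ofReal (χ (field d a (fun v => Y v ω) x)) := by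
        unfold cIndE
        rw [if_pos hcl]
      rw [heq] at hle
      have hlt2 : ENNReal.ofReal (χ (field d a (fun v => Y v ω) x)) < lam :=
        lt_of_le_of_lt hle (hω n)
      rw [hlam] at hlt2
      have hltR : χ (field d a (fun v => Y v ω) x) < lamR :=
        (ENNReal.ofReal_lt_ofReal_iff_of_nonneg (hcrit.nonneg _)).mp hlt2
      by_contra hcon
      push_neg at hcon
      have := hH _ hcon.le
      linarith
    · intro n
      rw [hgenT n, Set.encard_coe_eq_coe_finsetCard]
      set s : Finset (V d) := (T d n).filter
        (fun x => x ∈ cluster d hstar (field d a fun v => Y v ω)) with hs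
      have hterm : ∀ x ∈ s, ENNReal.ofReal δ ≤ cIndE d hstar a χ Y x ω := by
        intro x hx
        rw [hs, Finset.mem_filter] at hx
        unfold cIndE
        rw [if_pos hx.2]
        exact ENNReal.ofReal_le_ofReal (hδlow _ (cluster_le_self hx.2))
      have hcard : (s.card : ℝ≥0∞) * ENNReal.ofReal δ ≤ MnE d hstar a χ Y n ω := by
        calc (s.card : ℝ≥0∞) * ENNReal.ofReal δ
            = s.card • ENNReal.ofReal δ := (nsmul_eq_mul _ _).symm
          _ ≤ ∑ x ∈ s, cIndE d hstar a χ Y x ω := Finset.card_nsmul_le_sum s _ _ hterm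
          _ ≤ MnE d hstar a χ Y n ω := by
              unfold MnE
              exact Finset.sum_le_sum_of_subset (hs ▸ Finset.filter_subset _ _)
      have hlt3 : (s.card : ℝ≥0∞) * ENNReal.ofReal δ < lam :=
        lt_of_le_of_lt hcard (hω n)
      have hlt4 : ENNReal.ofReal ((s.card : ℝ) * δ) < ENNReal.ofReal lamR := by
        rw [ENNReal.ofReal_mul (Nat.cast_nonneg _), ENNReal.ofReal_natCast]
        rw [hlam] at hlt3
        exact hlt3
      have hR : (s.card : ℝ) * δ < lamR :=
        (ENNReal.ofReal_lt_ofReal_iff_of_nonneg (by positivity)).mp hlt4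
      have hcardle : (s.card : ℝ) ≤ lamR / δ := (le_div_iff₀ hδ0).mpr hR.le
      have hcastN : (s.card : ℝ) ≤ (N : ℝ) := le_trans hcardle (Nat.le_ceil _)
      have hcardN : s.card ≤ N := by exact_mod_cast hcastN
      exact_mod_cast Nat.cast_le.mpr hcardN
  -- conclusion
  have hfinal : ∀ G : Set Ω, Bᶜ ⊆ G → 1 - ε ≤ (P G).toReal := by
    intro G hsub
    have h1 : P Bᶜ ≤ P G := measure_mono hsub
    have h2 : (P Bᶜ).toReal ≤ (P G).toReal := ENNReal.toReal_mono (measure_ne_top P G) h1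
    have h4 : (P Bᶜ).toReal = 1 - (P B).toReal := by
      rw [prob_compl_eq_one_sub hmB,
        ENNReal.toReal_sub_of_le prob_le_one ENNReal.one_ne_top, ENNReal.toReal_one]
    have h5 : (P B).toReal ≤ ε := ENNReal.toReal_le_of_le_ofReal hε.le hPB
    linarith
  refine ⟨H, N, hfinal _ ?_, hfinal _ ?_⟩
  · intro ω hω
    exact (hgood ω hω).1
  · intro ω hω
    exact (hgood ω hω).2

end GFF
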